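/- Let B ∈ ℝ^{n×n} be square and let A = [[0, B],[Bᵀ, 0]] ∈ ℝ^{2n×2n} be the associated Jordan–Wielandt matrix. For z ∈ {−1, +1}ⁿ let z̃ = [z; 0] ∈ ℝ^{2n} (the upper partial Rademacher vector). Then the average over all 2ⁿ sign vectors satisfies 2 · (1/2ⁿ) Σ_{z ∈ {−1,+1}ⁿ} z̃ᵀ exp(A) z̃ = tr(exp(A)); i.e. the estimator tr(exp(A))† = (2/N) Σ_{k=1}^N z̃_kᵀ exp(A) z̃_k with i.i.d. uniformly distributed partial Rademacher vectors z̃_k is an unbiased estimator of tr(exp(A)). The same identity holds for the lower partial Rademacher vectors z̃ = [0; z]. -/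

import Mathlib

open Matrix

/-- The `±1` sign vector encoded by a Boolean vector. -/
def radVec {n : ℕ} (s : Fin n → Bool) : Fin n → ℝ :=
  fun i => if s i then 1 else -1

lemma radVec_mul_self {n : ℕ} (s : Fin n → Bool) (i : Fin n) :
    radVec s i * radVec s i = 1 := by
  unfold radVec; by_cases h : s i <;> simp [h]

lemma rad_sum {n : ℕ} (i j : Fin n) :
    ∑ s : Fin n → Bool, radVec s i * radVec s j
      = if i = j then ((2 : ℝ) ^ n) else 0 := by
  split_ifs with h
  · subst h
    rw [Finset.sum_congr rfl (fun s _ => radVec_mul_self s i)]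
    simp [Fintype.card_fun]
  · refine Finset.sum_ninvolution (fun s => Function.update s i (!s i))
      (fun s => ?_) (fun s hs => ?_) (fun s => Finset.mem_univ _) (fun s => ?_)
    · have h1 : radVec (Function.update s i (!s i)) i = -radVec s i := by
        unfold radVec
        by_cases hsi : s i <;> simp [hsi, Function.update_self]
      have h2 : radVec (Function.update s i (!s i)) j = radVec s j := by
        unfold radVec
        rw [Function.update_of_ne (Ne.symm h)]
      rw [h1, h2]; ring
    · intro hupd
      have h2 : Function.update s i (!s i) i = s i := congrFun hupd i
      rw [Function.update_self] at h2
      cases hsi : s i <;> rw [hsi] at h2 <;> simp at h2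
    · funext k
      by_cases hk : k = i
      · subst hk; simp [Function.update_self]
      · simp [Function.update_of_ne hk]

/-- Sum of the upper quadratic forms over all sign vectors. -/
lemma upper_form {n : ℕ} (M : Matrix (Fin n ⊕ Fin n) (Fin n ⊕ Fin n) ℝ) :
    ∑ s : Fin n → Bool,
        Sum.elim (radVec s) 0 ⬝ᵥ M.mulVec (Sum.elim (radVec s) 0)
      = 2 ^ n * ∑ i, M (Sum.inl i) (Sum.inl i) := by
  have key : ∀ s : Fin n → Bool,
      Sum.elim (radVec s) 0 ⬝ᵥ M.mulVec (Sum.elim (radVec s) 0)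
        = ∑ i, ∑ j, M (Sum.inl i) (Sum.inl j) * (radVec s i * radVec s j) := by
    intro s
    simp only [dotProduct, mulVec, Fintype.sum_sum_type, Sum.elim_inl, Sum.elim_inr,
      Pi.zero_apply, zero_mul, mul_zero, Finset.sum_const_zero, add_zero,
      Finset.mul_sum]
    exact Finset.sum_congr rfl fun i _ => Finset.sum_congr rfl fun j _ => by ring
  rw [Finset.sum_congr rfl fun s _ => key s]
  rw [Finset.sum_comm]
  have : ∀ i : Fin n,
      ∑ s : Fin n → Bool, ∑ j, M (Sum.inl i) (Sum.inl j) * (radVec s i * radVec s j)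
        = 2 ^ n * M (Sum.inl i) (Sum.inl i) := by
    intro i
    rw [Finset.sum_comm]
    have : ∀ j : Fin n,
        ∑ s : Fin n → Bool, M (Sum.inl i) (Sum.inl j) * (radVec s i * radVec s j)
          = M (Sum.inl i) (Sum.inl j) * (if i = j then ((2:ℝ) ^ n) else 0) := by
      intro j
      rw [← Finset.mul_sum, rad_sum]
    rw [Finset.sum_congr rfl fun j _ => this j]
    simp only [mul_ite, mul_zero]
    rw [Finset.sum_ite_eq]
    simp [mul_comm]
  rw [Finset.sum_congr rfl fun i _ => this i, ← Finset.mul_sum]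

/-- Sum of the lower quadratic forms over all sign vectors. -/
lemma lower_form {n : ℕ} (M : Matrix (Fin n ⊕ Fin n) (Fin n ⊕ Fin n) ℝ) :
    ∑ s : Fin n → Bool,
        Sum.elim 0 (radVec s) ⬝ᵥ M.mulVec (Sum.elim 0 (radVec s))
      = 2 ^ n * ∑ i, M (Sum.inr i) (Sum.inr i) := by
  have key : ∀ s : Fin n → Bool,
      Sum.elim 0 (radVec s) ⬝ᵥ M.mulVec (Sum.elim 0 (radVec s))
        = ∑ i, ∑ j, M (Sum.inr i) (Sum.inr j) * (radVec s i * radVec s j) := by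
    intro s
    simp only [dotProduct, mulVec, Fintype.sum_sum_type, Sum.elim_inl, Sum.elim_inr,
      Pi.zero_apply, zero_mul, mul_zero, Finset.sum_const_zero, zero_add,
      Finset.mul_sum]
    exact Finset.sum_congr rfl fun i _ => Finset.sum_congr rfl fun j _ => by ring
  rw [Finset.sum_congr rfl fun s _ => key s]
  rw [Finset.sum_comm]
  have : ∀ i : Fin n,
      ∑ s : Fin n → Bool, ∑ j, M (Sum.inr i) (Sum.inr j) * (radVec s i * radVec s j)
        = 2 ^ n * M (Sum.inr i) (Sum.inr i) := by
    intro i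
    rw [Finset.sum_comm]
    have : ∀ j : Fin n,
        ∑ s : Fin n → Bool, M (Sum.inr i) (Sum.inr j) * (radVec s i * radVec s j)
          = M (Sum.inr i) (Sum.inr j) * (if i = j then ((2:ℝ) ^ n) else 0) := by
      intro j
      rw [← Finset.mul_sum, rad_sum]
    rw [Finset.sum_congr rfl fun j _ => this j]
    simp only [mul_ite, mul_zero]
    rw [Finset.sum_ite_eq]
    simp [mul_comm]
  rw [Finset.sum_congr rfl fun i _ => this i, ← Finset.mul_sum]

lemma JW_sq {n : ℕ} (B : Matrix (Fin n) (Fin n) ℝ) :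
    (Matrix.fromBlocks 0 B Bᵀ 0) * (Matrix.fromBlocks 0 B Bᵀ 0)
      = Matrix.fromBlocks (B * Bᵀ) 0 0 (Bᵀ * B) := by
  simp [Matrix.fromBlocks_multiply]

lemma JW_pow_even {n : ℕ} (B : Matrix (Fin n) (Fin n) ℝ) (m : ℕ) :
    (Matrix.fromBlocks 0 B Bᵀ 0) ^ (2 * m)
      = Matrix.fromBlocks ((B * Bᵀ) ^ m) 0 0 ((Bᵀ * B) ^ m) := by
  induction m with
  | zero => simp [Matrix.fromBlocks_one]
  | succ m ih =>
    have h2 : 2 * (m + 1) = 2 * m + 2 := by ring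
    rw [h2, pow_add, ih, pow_two, JW_sq, Matrix.fromBlocks_multiply]
    simp [← pow_succ]

lemma JW_pow_odd {n : ℕ} (B : Matrix (Fin n) (Fin n) ℝ) (m : ℕ) :
    (Matrix.fromBlocks 0 B Bᵀ 0) ^ (2 * m + 1)
      = Matrix.fromBlocks 0 ((B * Bᵀ) ^ m * B) ((Bᵀ * B) ^ m * Bᵀ) 0 := by
  rw [pow_succ, JW_pow_even, Matrix.fromBlocks_multiply]
  simp

lemma trace_pow_eq {n : ℕ} (B : Matrix (Fin n) (Fin n) ℝ) (m : ℕ) :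
    ((B * Bᵀ) ^ m).trace = ((Bᵀ * B) ^ m).trace := by
  cases m with
  | zero => simp
  | succ m =>
    have hsc : B * (Bᵀ * B) ^ m = (B * Bᵀ) ^ m * B := by
      have h : SemiconjBy B (Bᵀ * B) (B * Bᵀ) := by
        unfold SemiconjBy; rw [← mul_assoc]
      exact (h.pow_right m)
    calc ((B * Bᵀ) ^ (m + 1)).trace
        = ((B * Bᵀ) ^ m * B * Bᵀ).trace := by rw [pow_succ, mul_assoc]
      _ = (Bᵀ * ((B * Bᵀ) ^ m * B)).trace := Matrix.trace_mul_comm _ _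
      _ = (Bᵀ * (B * (Bᵀ * B) ^ m)).trace := by rw [hsc]
      _ = ((Bᵀ * B) * (Bᵀ * B) ^ m).trace := by rw [← mul_assoc]
      _ = ((Bᵀ * B) ^ (m + 1)).trace := by rw [← pow_succ']

/-- For every power of the Jordan–Wielandt matrix, the two partial traces agree. -/
lemma JW_pow_partial_trace {n : ℕ} (B : Matrix (Fin n) (Fin n) ℝ) (k : ℕ) :
    ∑ i, ((Matrix.fromBlocks 0 B Bᵀ 0) ^ k) (Sum.inl i) (Sum.inl i)
      = ∑ i, ((Matrix.fromBlocks 0 B Bᵀ 0) ^ k) (Sum.inr i) (Sum.inr i) := by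
  rcases Nat.even_or_odd k with ⟨m, hm⟩ | ⟨m, hm⟩
  · have hk : k = 2 * m := by omega
    subst hk
    rw [JW_pow_even]
    simp only [Matrix.fromBlocks_apply₁₁, Matrix.fromBlocks_apply₂₂]
    have := trace_pow_eq B m
    simpa [Matrix.trace, Matrix.diag] using this
  · subst hm
    rw [JW_pow_odd]
    simp

/-- The partial traces of `exp` of the Jordan–Wielandt matrix agree. -/
lemma JW_exp_partial_trace {n : ℕ} (B : Matrix (Fin n) (Fin n) ℝ) :
    ∑ i, (NormedSpace.exp (Matrix.fromBlocks 0 B Bᵀ 0)) (Sum.inl i) (Sum.inl i)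
      = ∑ i, (NormedSpace.exp (Matrix.fromBlocks 0 B Bᵀ 0)) (Sum.inr i) (Sum.inr i) := by
  letI : SeminormedRing (Matrix (Fin n ⊕ Fin n) (Fin n ⊕ Fin n) ℝ) :=
    Matrix.linftyOpSemiNormedRing
  letI : NormedRing (Matrix (Fin n ⊕ Fin n) (Fin n ⊕ Fin n) ℝ) :=
    Matrix.linftyOpNormedRing
  letI : NormedAlgebra ℝ (Matrix (Fin n ⊕ Fin n) (Fin n ⊕ Fin n) ℝ) :=
    Matrix.linftyOpNormedAlgebra
  set A : Matrix (Fin n ⊕ Fin n) (Fin n ⊕ Fin n) ℝ := Matrix.fromBlocks 0 B Bᵀ 0 with hA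
  let L : Matrix (Fin n ⊕ Fin n) (Fin n ⊕ Fin n) ℝ →ₗ[ℝ] ℝ :=
    { toFun := fun M => (∑ i, M (Sum.inl i) (Sum.inl i)) - ∑ i, M (Sum.inr i) (Sum.inr i)
      map_add' := fun M N => by simp [Finset.sum_add_distrib]; ring
      map_smul' := fun c M => by
        simp only [Matrix.smul_apply, smul_eq_mul, RingHom.id_apply]
        rw [← Finset.mul_sum, ← Finset.mul_sum]; ring }
  have hL : Continuous L := L.continuous_of_finiteDimensional
  have hsum : Summable fun k : ℕ => ((k.factorial : ℝ)⁻¹) • A ^ k :=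
    NormedSpace.expSeries_summable' (𝕂 := ℝ) A
  have hmap : L (NormedSpace.exp A)
      = ∑' k : ℕ, L (((k.factorial : ℝ)⁻¹) • A ^ k) := by
    rw [NormedSpace.exp_eq_tsum ℝ]
    exact (hsum.hasSum.map L hL).tsum_eq.symm
  have hterm : ∀ k : ℕ, L (((k.factorial : ℝ)⁻¹) • A ^ k) = 0 := by
    intro k
    rw [L.map_smul]
    have hLk : L (A ^ k) = 0 := by
      have h := JW_pow_partial_trace B k
      simp only [L, LinearMap.coe_mk, AddHom.coe_mk]
      rw [hA, h, sub_self]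
    rw [hLk, smul_zero]
  have hz : L (NormedSpace.exp A) = 0 := by
    rw [hmap]
    simp [hterm]
  have : (∑ i, (NormedSpace.exp A) (Sum.inl i) (Sum.inl i))
      - ∑ i, (NormedSpace.exp A) (Sum.inr i) (Sum.inr i) = 0 := hz
  linarith

/-- unbiasedness, square case `n₁ = n₂ = n`: averaging the doubled
quadratic forms `z̃ᵀ exp(A) z̃` over all `2ⁿ` upper (resp. lower) partial
Rademacher vectors `z̃ = [z; 0]` (resp. `[0; z]`) recovers `tr(exp A)` exactly,
so the corresponding stochastic trace estimator is unbiased. -/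
theorem partial_rademacher_unbiased_square
    {n : ℕ} (B : Matrix (Fin n) (Fin n) ℝ)
    (A : Matrix (Fin n ⊕ Fin n) (Fin n ⊕ Fin n) ℝ)
    (hA : A = Matrix.fromBlocks 0 B Bᵀ 0) :
    2 * ((1 / 2 ^ n) * ∑ s : Fin n → Bool,
        Sum.elim (radVec s) 0 ⬝ᵥ (NormedSpace.exp A).mulVec (Sum.elim (radVec s) 0))
      = (NormedSpace.exp A).trace ∧
    2 * ((1 / 2 ^ n) * ∑ s : Fin n → Bool,
        Sum.elim 0 (radVec s) ⬝ᵥ (NormedSpace.exp A).mulVec (Sum.elim 0 (radVec s)))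
      = (NormedSpace.exp A).trace := by
  subst hA
  set M := NormedSpace.exp (Matrix.fromBlocks 0 B Bᵀ 0) with hM
  have hblocks : ∑ i, M (Sum.inl i) (Sum.inl i) = ∑ i, M (Sum.inr i) (Sum.inr i) :=
    JW_exp_partial_trace B
  have htrace : M.trace
      = (∑ i, M (Sum.inl i) (Sum.inl i)) + ∑ i, M (Sum.inr i) (Sum.inr i) := by
    simp [Matrix.trace, Matrix.diag, Fintype.sum_sum_type]
  have hpow : ((2 : ℝ) ^ n) ≠ 0 := by positivity
  constructor
  · rw [upper_form M, htrace, ← hblocks]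
    field_simp
    ring
  · rw [lower_form M, htrace, hblocks]
    field_simp
    ring
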